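/- Let Z be a random k₁×k₂ real matrix on a probability space with E[‖Z‖_F²] < ∞ that is spherically symmetric, i.e., for every pair of orthogonal matrices Q₁ ∈ O(k₁) and Q₂ ∈ O(k₂), the random matrix Q₁ᵀ Z Q₂ has the same distribution as Z. Then for any fixed (deterministic) matrices A₁ ∈ ℝ^{k₁×m₁} and A₂ ∈ ℝ^{k₂×m₂}: E[‖A₁ᵀ Z A₂‖_F²] = (1/(k₁·k₂))·‖A₁‖_F²·‖A₂‖_F²·E[‖Z‖_F²]. -/

import Mathlib

open Matrix MeasureTheory

/-- The Frobenius norm of a real matrix. -/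
noncomputable def frobNorm {m n : Type*} [Fintype m] [Fintype n] (A : Matrix m n ℝ) : ℝ :=
  Real.sqrt (∑ i, ∑ j, A i j ^ 2)

/-- The squared Frobenius norm of a real matrix. -/
noncomputable def frobSq {m n : Type*} [Fintype m] [Fintype n] (A : Matrix m n ℝ) : ℝ :=
  ∑ i, ∑ j, A i j ^ 2

instance matrixMeasurableSpace {m n : Type*} : MeasurableSpace (Matrix m n ℝ) :=
  MeasurableSpace.pi

namespace Stmt11Aux

lemma measEntry {k₁ k₂ : ℕ} (i : Fin k₁) (j : Fin k₂) :
    Measurable fun M : Matrix (Fin k₁) (Fin k₂) ℝ => M i j :=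
  (measurable_pi_apply j).comp (measurable_pi_apply (X := fun _ : Fin k₁ => Fin k₂ → ℝ) i)

noncomputable def signM {k : ℕ} (i : Fin k) : Matrix (Fin k) (Fin k) ℝ :=
  Matrix.diagonal (fun a => if a = i then -1 else 1)

lemma signM_orth {k : ℕ} (i : Fin k) : (signM i)ᵀ * signM i = 1 := by
  rw [signM, Matrix.diagonal_transpose, Matrix.diagonal_mul_diagonal]
  ext a b
  by_cases h : a = b <;> simp [Matrix.diagonal_apply, Matrix.one_apply, h] <;> split_ifs <;> norm_num

lemma signM_left {k₂' : ℕ} {k : ℕ} (i : Fin k) (M : Matrix (Fin k) (Fin k₂') ℝ) (a : Fin k) (b : Fin k₂') :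
    ((signM i)ᵀ * M * (1 : Matrix (Fin k₂') (Fin k₂') ℝ)) a b = (if a = i then -1 else 1) * M a b := by
  rw [Matrix.mul_one, signM, Matrix.diagonal_transpose, Matrix.diagonal_mul]

lemma signM_right {k₁' : ℕ} {k : ℕ} (j : Fin k) (M : Matrix (Fin k₁') (Fin k) ℝ) (a : Fin k₁') (b : Fin k) :
    ((1:Matrix (Fin k₁') (Fin k₁') ℝ)ᵀ * M * signM j) a b = M a b * (if b = j then -1 else 1) := by
  rw [Matrix.transpose_one, Matrix.one_mul, signM, Matrix.mul_diagonal]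

noncomputable def permM {k : ℕ} (σ : Equiv.Perm (Fin k)) : Matrix (Fin k) (Fin k) ℝ :=
  Matrix.of fun a b => if σ b = a then 1 else 0

lemma permM_orth {k : ℕ} (σ : Equiv.Perm (Fin k)) : (permM σ)ᵀ * permM σ = 1 := by
  ext a b
  simp [permM, Matrix.mul_apply, Matrix.one_apply, Finset.sum_ite_eq, eq_comm]

lemma permM_conj {k k' : ℕ} (σ : Equiv.Perm (Fin k)) (τ : Equiv.Perm (Fin k'))
    (M : Matrix (Fin k) (Fin k') ℝ) (a : Fin k) (b : Fin k') :
    ((permM σ)ᵀ * M * permM τ) a b = M (σ a) (τ b) := by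
  simp [permM, Matrix.mul_apply, Finset.sum_ite_eq, ite_mul, mul_ite,
    Finset.mul_sum, Finset.sum_mul]

variable {Ω : Type*} [MeasurableSpace Ω] {k₁ k₂ : ℕ}

lemma measTransform {Z : Ω → Matrix (Fin k₁) (Fin k₂) ℝ} (hZ : Measurable Z)
    (Q₁ : Matrix (Fin k₁) (Fin k₁) ℝ) (Q₂ : Matrix (Fin k₂) (Fin k₂) ℝ) :
    Measurable fun ω => Q₁ᵀ * Z ω * Q₂ := by
  apply measurable_pi_lambda; intro a; apply measurable_pi_lambda; intro b
  simp only [Matrix.mul_apply]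
  apply Finset.measurable_sum; intro d _
  apply Measurable.mul _ measurable_const
  apply Finset.measurable_sum; intro c _
  exact measurable_const.mul ((measEntry c d).comp hZ)

lemma push (μ : Measure Ω) {Z : Ω → Matrix (Fin k₁) (Fin k₂) ℝ} (hZ : Measurable Z)
    (hsym : ∀ (Q₁ : Matrix (Fin k₁) (Fin k₁) ℝ) (Q₂ : Matrix (Fin k₂) (Fin k₂) ℝ),
      Q₁ᵀ * Q₁ = 1 → Q₂ᵀ * Q₂ = 1 →
      Measure.map (fun ω => Q₁ᵀ * Z ω * Q₂) μ = Measure.map Z μ)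
    (Q₁ : Matrix (Fin k₁) (Fin k₁) ℝ) (Q₂ : Matrix (Fin k₂) (Fin k₂) ℝ)
    (h1 : Q₁ᵀ * Q₁ = 1) (h2 : Q₂ᵀ * Q₂ = 1)
    {g : Matrix (Fin k₁) (Fin k₂) ℝ → ℝ} (hg : Measurable g) :
    ∫ ω, g (Q₁ᵀ * Z ω * Q₂) ∂μ = ∫ ω, g (Z ω) ∂μ := by
  rw [← integral_map (measTransform hZ Q₁ Q₂).aemeasurable hg.aestronglyMeasurable,
      hsym Q₁ Q₂ h1 h2,
      integral_map hZ.aemeasurable hg.aestronglyMeasurable]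

lemma sq_le_frobSq {k₁ k₂ : ℕ} (M : Matrix (Fin k₁) (Fin k₂) ℝ) (i : Fin k₁) (j : Fin k₂) :
    M i j ^ 2 ≤ frobSq M := by
  unfold frobSq
  calc M i j ^ 2 ≤ ∑ j', M i j' ^ 2 :=
        Finset.single_le_sum (f := fun j' => M i j' ^ 2) (fun _ _ => sq_nonneg _) (Finset.mem_univ j)
    _ ≤ ∑ i', ∑ j', M i' j' ^ 2 :=
        Finset.single_le_sum (f := fun i' => ∑ j', M i' j' ^ 2) (fun i' _ => Finset.sum_nonneg fun _ _ => sq_nonneg _)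
          (Finset.mem_univ i)

lemma frobSq_nonneg {k₁ k₂ : ℕ} (M : Matrix (Fin k₁) (Fin k₂) ℝ) : 0 ≤ frobSq M :=
  Finset.sum_nonneg fun _ _ => Finset.sum_nonneg fun _ _ => sq_nonneg _

end Stmt11Aux

open Stmt11Aux in
theorem stmt_11 {Ω : Type*} [MeasurableSpace Ω] (μ : Measure Ω) [IsProbabilityMeasure μ]
    {k₁ k₂ m₁ m₂ : ℕ}
    (Z : Ω → Matrix (Fin k₁) (Fin k₂) ℝ) (hZmeas : Measurable Z)
    (hZint : Integrable (fun ω => frobSq (Z ω)) μ)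
    (hsym : ∀ (Q₁ : Matrix (Fin k₁) (Fin k₁) ℝ) (Q₂ : Matrix (Fin k₂) (Fin k₂) ℝ),
      Q₁ᵀ * Q₁ = 1 → Q₂ᵀ * Q₂ = 1 →
      Measure.map (fun ω => Q₁ᵀ * Z ω * Q₂) μ = Measure.map Z μ)
    (A₁ : Matrix (Fin k₁) (Fin m₁) ℝ) (A₂ : Matrix (Fin k₂) (Fin m₂) ℝ) :
    ∫ ω, frobSq (A₁ᵀ * Z ω * A₂) ∂μ =
      (1 / ((k₁ : ℝ) * (k₂ : ℝ))) * frobSq A₁ * frobSq A₂ * ∫ ω, frobSq (Z ω) ∂μ := by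
  rcases Nat.eq_zero_or_pos k₁ with hk₁ | hk₁
  · subst hk₁
    have h0 : ∀ ω, frobSq (A₁ᵀ * Z ω * A₂) = 0 := by
      intro ω; simp [frobSq, Matrix.mul_apply]
    have hA : frobSq A₁ = 0 := by simp [frobSq]
    simp [h0, hA, frobSq]
  rcases Nat.eq_zero_or_pos k₂ with hk₂ | hk₂
  · subst hk₂
    have h0 : ∀ ω, frobSq (A₁ᵀ * Z ω * A₂) = 0 := by
      intro ω; simp [frobSq, Matrix.mul_apply]
    have hA : frobSq A₂ = 0 := by simp [frobSq]
    simp [h0, hA, frobSq]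
  set i₀ : Fin k₁ := ⟨0, hk₁⟩ with hi₀
  set j₀ : Fin k₂ := ⟨0, hk₂⟩ with hj₀
  have hZent : ∀ (i : Fin k₁) (j : Fin k₂), Measurable fun ω => Z ω i j :=
    fun i j => (measEntry i j).comp hZmeas
  have hprod : ∀ (i i' : Fin k₁) (j j' : Fin k₂),
      Integrable (fun ω => Z ω i j * Z ω i' j') μ := by
    intro i i' j j'
    refine hZint.mono ((hZent i j).mul (hZent i' j')).aestronglyMeasurable
      (Filter.Eventually.of_forall fun ω => ?_)
    rw [Real.norm_eq_abs, Real.norm_eq_abs, abs_of_nonneg (frobSq_nonneg _), abs_mul]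
    nlinarith [sq_le_frobSq (Z ω) i j, sq_le_frobSq (Z ω) i' j',
      sq_nonneg (|Z ω i j| - |Z ω i' j'|), sq_abs (Z ω i j), sq_abs (Z ω i' j'),
      abs_nonneg (Z ω i j), abs_nonneg (Z ω i' j')]
  set v : ℝ := ∫ ω, Z ω i₀ j₀ ^ 2 ∂μ with hv
  have hval : ∀ (i : Fin k₁) (j : Fin k₂), ∫ ω, Z ω i j ^ 2 ∂μ = v := by
    intro i j
    have hg : Measurable fun M : Matrix (Fin k₁) (Fin k₂) ℝ => M i₀ j₀ ^ 2 :=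
      (measEntry i₀ j₀).pow_const 2
    have h := push μ hZmeas hsym (permM (Equiv.swap i₀ i)) (permM (Equiv.swap j₀ j))
      (permM_orth _) (permM_orth _) hg
    have hpt : ∀ ω, ((permM (Equiv.swap i₀ i))ᵀ * Z ω * permM (Equiv.swap j₀ j)) i₀ j₀ ^ 2
        = Z ω i j ^ 2 := by
      intro ω; rw [permM_conj, Equiv.swap_apply_left, Equiv.swap_apply_left]
    simp_rw [hpt] at h
    rw [hv]
    exact h
  have hzero₁ : ∀ (i i' : Fin k₁) (j j' : Fin k₂), i' ≠ i →
      ∫ ω, Z ω i j * Z ω i' j' ∂μ = 0 := by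
    intro i i' j j' hne
    have hg : Measurable fun M : Matrix (Fin k₁) (Fin k₂) ℝ => M i j * M i' j' :=
      (measEntry i j).mul (measEntry i' j')
    have h := push μ hZmeas hsym (signM i) 1 (signM_orth i)
      (by rw [Matrix.transpose_one, Matrix.one_mul]) hg
    have hpt : ∀ ω, ((signM i)ᵀ * Z ω * (1 : Matrix (Fin k₂) (Fin k₂) ℝ)) i j * ((signM i)ᵀ * Z ω * (1 : Matrix (Fin k₂) (Fin k₂) ℝ)) i' j'
        = -(Z ω i j * Z ω i' j') := by
      intro ω; rw [signM_left, signM_left, if_pos rfl, if_neg hne]; ring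
    simp_rw [hpt, integral_neg] at h
    linarith
  have hzero₂ : ∀ (i i' : Fin k₁) (j j' : Fin k₂), j' ≠ j →
      ∫ ω, Z ω i j * Z ω i' j' ∂μ = 0 := by
    intro i i' j j' hne
    have hg : Measurable fun M : Matrix (Fin k₁) (Fin k₂) ℝ => M i j * M i' j' :=
      (measEntry i j).mul (measEntry i' j')
    have h := push μ hZmeas hsym 1 (signM j)
      (by rw [Matrix.transpose_one, Matrix.one_mul]) (signM_orth j) hg
    have hpt : ∀ ω, ((1 : Matrix (Fin k₁) (Fin k₁) ℝ)ᵀ * Z ω * signM j) i j *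
        ((1 : Matrix (Fin k₁) (Fin k₁) ℝ)ᵀ * Z ω * signM j) i' j'
        = -(Z ω i j * Z ω i' j') := by
      intro ω; rw [signM_right, signM_right, if_pos rfl, if_neg hne]; ring
    simp_rw [hpt, integral_neg] at h
    linarith
  have key : ∀ (i i' : Fin k₁) (j j' : Fin k₂),
      ∫ ω, Z ω i j * Z ω i' j' ∂μ
        = if i' = i then (if j' = j then v else 0) else 0 := by
    intro i i' j j'
    by_cases h1 : i' = i
    · subst h1
      by_cases h2 : j' = j
      · subst h2
        simp only [if_pos rfl]
        simpa [pow_two] using hval i' j'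
      · rw [if_pos rfl, if_neg h2]; exact hzero₂ _ _ _ _ h2
    · rw [if_neg h1]; exact hzero₁ _ _ _ _ h1
  have htot : ∫ ω, frobSq (Z ω) ∂μ = (k₁ : ℝ) * (k₂ : ℝ) * v := by
    have hunf : (fun ω => frobSq (Z ω)) = fun ω => ∑ i, ∑ j, Z ω i j ^ 2 := rfl
    rw [hunf]
    rw [integral_finset_sum _ (fun i _ => integrable_finset_sum _
      (fun j _ => by simpa [pow_two] using hprod i i j j))]
    have : ∀ i : Fin k₁, ∫ ω, ∑ j, Z ω i j ^ 2 ∂μ = ∑ j : Fin k₂, v := by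
      intro i
      rw [integral_finset_sum _ (fun j _ => by simpa [pow_two] using hprod i i j j)]
      exact Finset.sum_congr rfl fun j _ => hval i j
    rw [Finset.sum_congr rfl fun i _ => this i]
    simp [Finset.sum_const, Finset.card_univ]
    ring
  -- pointwise expansion of each entry squared
  have he : ∀ (p : Fin m₁) (q : Fin m₂) (ω : Ω),
      (A₁ᵀ * Z ω * A₂) p q ^ 2
        = ∑ j, ∑ j', ∑ i, ∑ i',
            (A₁ i p * A₂ j q * (A₁ i' p * A₂ j' q)) * (Z ω i j * Z ω i' j') := by
    intro p q ω
    have hentry : (A₁ᵀ * Z ω * A₂) p q = ∑ j, ∑ i, A₁ i p * A₂ j q * Z ω i j := by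
      simp only [Matrix.mul_apply, Matrix.transpose_apply, Finset.sum_mul]
      refine Finset.sum_congr rfl fun j _ => Finset.sum_congr rfl fun i _ => by ring
    rw [hentry, pow_two, Finset.sum_mul_sum]
    refine Finset.sum_congr rfl fun j _ => Finset.sum_congr rfl fun j' _ => ?_
    rw [Finset.sum_mul_sum]
    refine Finset.sum_congr rfl fun i _ => Finset.sum_congr rfl fun i' _ => by ring
  have hint : ∀ (p : Fin m₁) (q : Fin m₂),
      Integrable (fun ω => (A₁ᵀ * Z ω * A₂) p q ^ 2) μ := by
    intro p q
    rw [show (fun ω => (A₁ᵀ * Z ω * A₂) p q ^ 2)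
        = fun ω => ∑ j, ∑ j', ∑ i, ∑ i',
            (A₁ i p * A₂ j q * (A₁ i' p * A₂ j' q)) * (Z ω i j * Z ω i' j')
      from funext (he p q)]
    exact integrable_finset_sum _ fun j _ => integrable_finset_sum _ fun j' _ =>
      integrable_finset_sum _ fun i _ => integrable_finset_sum _ fun i' _ =>
        (hprod i i' j j').const_mul _
  have entryInt : ∀ (p : Fin m₁) (q : Fin m₂),
      ∫ ω, (A₁ᵀ * Z ω * A₂) p q ^ 2 ∂μ
        = v * ((∑ i, A₁ i p ^ 2) * (∑ j, A₂ j q ^ 2)) := by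
    intro p q
    simp_rw [he p q]
    rw [integral_finset_sum _ (fun j _ => integrable_finset_sum _ fun j' _ =>
      integrable_finset_sum _ fun i _ => integrable_finset_sum _ fun i' _ =>
        (hprod i i' j j').const_mul _)]
    have step : ∀ j : Fin k₂,
        ∫ ω, ∑ j', ∑ i, ∑ i',
            (A₁ i p * A₂ j q * (A₁ i' p * A₂ j' q)) * (Z ω i j * Z ω i' j') ∂μ
          = ∑ j', ∑ i, ∑ i', (A₁ i p * A₂ j q * (A₁ i' p * A₂ j' q))
              * ∫ ω, Z ω i j * Z ω i' j' ∂μ := by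
      intro j
      rw [integral_finset_sum _ (fun j' _ => integrable_finset_sum _ fun i _ =>
        integrable_finset_sum _ fun i' _ => (hprod i i' j j').const_mul _)]
      refine Finset.sum_congr rfl fun j' _ => ?_
      rw [integral_finset_sum _ (fun i _ => integrable_finset_sum _ fun i' _ =>
        (hprod i i' j j').const_mul _)]
      refine Finset.sum_congr rfl fun i _ => ?_
      rw [integral_finset_sum _ (fun i' _ => (hprod i i' j j').const_mul _)]
      exact Finset.sum_congr rfl fun i' _ => integral_const_mul _ _
    rw [Finset.sum_congr rfl fun j _ => step j]
    simp_rw [key]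
    simp only [mul_ite, mul_zero, Finset.sum_ite_eq', Finset.mem_univ, if_true]
    refine Eq.trans (Finset.sum_congr rfl fun j _ => Finset.sum_comm) ?_
    refine Eq.trans (Finset.sum_congr rfl fun j _ => Finset.sum_congr rfl fun i _ =>
      (Finset.sum_ite_eq' Finset.univ j _).trans (if_pos (Finset.mem_univ j))) ?_
    refine Eq.trans (Finset.sum_congr rfl fun j _ => Finset.sum_congr rfl fun i _ =>
      (by ring : A₁ i p * A₂ j q * (A₁ i p * A₂ j q) * v
        = v * (A₂ j q ^ 2 * A₁ i p ^ 2))) ?_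
    simp_rw [← Finset.mul_sum]
    rw [← Finset.sum_mul]
    ring
  have hfinal : ∫ ω, frobSq (A₁ᵀ * Z ω * A₂) ∂μ
      = ∑ p, ∑ q, ∫ ω, (A₁ᵀ * Z ω * A₂) p q ^ 2 ∂μ := by
    rw [show (fun ω => frobSq (A₁ᵀ * Z ω * A₂))
        = fun ω => ∑ p, ∑ q, (A₁ᵀ * Z ω * A₂) p q ^ 2 from rfl]
    rw [integral_finset_sum _ (fun p _ => integrable_finset_sum _ fun q _ => hint p q)]
    exact Finset.sum_congr rfl fun p _ => integral_finset_sum _ fun q _ => hint p q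
  rw [hfinal, htot]
  rw [Finset.sum_congr rfl fun p (_ : p ∈ Finset.univ) =>
    Finset.sum_congr rfl fun q _ => entryInt p q]
  have hF₁ : frobSq A₁ = ∑ p, ∑ i, A₁ i p ^ 2 := Finset.sum_comm
  have hF₂ : frobSq A₂ = ∑ q, ∑ j, A₂ j q ^ 2 := Finset.sum_comm
  rw [hF₁, hF₂]
  simp_rw [← Finset.mul_sum]
  rw [← Finset.sum_mul]
  have hk₁' : (k₁ : ℝ) ≠ 0 := Nat.cast_ne_zero.mpr hk₁.ne'
  have hk₂' : (k₂ : ℝ) ≠ 0 := Nat.cast_ne_zero.mpr hk₂.ne'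
  field_simp
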